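/- Let m be a positive integer and i an integer with i ≥ m + 2^{ν₂(m)}. Then there exists an integer j in the interval [i − 2^{ν₂(m)}, i] such that C(j, m) is even. -/

import Mathlib

open Nat Finset

lemma even_choose_of_bit (v j m : ℕ) (hj : j / 2 ^ v % 2 = 0) (hm : m / 2 ^ v % 2 = 1) :
    Even (Nat.choose j m) := by
  haveI : Fact (Nat.Prime 2) := ⟨Nat.prime_two⟩
  have h := Choose.choose_modEq_choose_mul_prod_range_choose (n := j) (k := m)
    (p := 2) (v + 1)
  have hp : ∏ x ∈ range (v + 1), Nat.choose (j / 2 ^ x % 2) (m / 2 ^ x % 2) = 0 := by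
    apply Finset.prod_eq_zero (Finset.self_mem_range_succ v)
    rw [hj, hm]
    rfl
  rw [hp] at h
  simp only [Nat.cast_zero, mul_zero] at h
  have h2 : (2 : ℤ) ∣ (Nat.choose j m : ℤ) := (Int.modEq_zero_iff_dvd).mp h
  exact even_iff_two_dvd.mpr (by exact_mod_cast h2)

theorem stmt_7 (m : ℕ) (hm : 1 ≤ m) (i : ℕ) (hi : m + 2 ^ padicValNat 2 m ≤ i) :
    ∃ j : ℕ, i - 2 ^ padicValNat 2 m ≤ j ∧ j ≤ i ∧ Even (Nat.choose j m) := by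
  have hodd : m / 2 ^ padicValNat 2 m % 2 = 1 := by
    have hfac : m.factorization 2 = padicValNat 2 m := Nat.factorization_def m Nat.prime_two
    have h2 : ¬ 2 ∣ ordCompl[2] m := Nat.not_dvd_ordCompl Nat.prime_two (by omega)
    rw [hfac] at h2
    omega
  have hd0 : 0 < 2 ^ padicValNat 2 m := Nat.pow_pos (by norm_num)
  obtain ⟨d, hgen⟩ : ∃ d, 2 ^ padicValNat 2 m = d := ⟨_, rfl⟩
  rw [hgen] at hodd hi hd0 ⊢
  have hmod : d * (i / d) + i % d = i := Nat.div_add_mod i d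
  have hilt : i % d < d := Nat.mod_lt _ hd0
  rcases Nat.even_or_odd (i / d) with he | ho
  · rw [Nat.even_iff] at he
    refine ⟨i, by omega, le_refl i, even_choose_of_bit (padicValNat 2 m) i m ?_ ?_⟩ <;>
      rw [hgen] <;> assumption
  · rw [Nat.odd_iff] at ho
    obtain ⟨q, hq⟩ : ∃ q, i / d = q := ⟨_, rfl⟩
    rw [hq] at hmod ho
    obtain ⟨k, rfl⟩ : ∃ k, q = k + 1 := ⟨q - 1, by omega⟩
    have hj : d * (k + 1) - 1 = d * k + (d - 1) := by rw [Nat.mul_succ]; omega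
    refine ⟨d * (k + 1) - 1, by omega, by omega,
      even_choose_of_bit (padicValNat 2 m) _ m ?_ ?_⟩ <;> rw [hgen]
    · rw [hj, Nat.mul_add_div hd0, Nat.div_eq_of_lt (by omega)]
      omega
    · exact hodd
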